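/- Let p be a prime and let n̄ ≥ 2 and r ≥ 2 be integers, and set N = n̄ + r − 1. Then the group G = G(N,N,r) satisfies: if r ≤ n̄ − 1, then G/Z(G)^p is isomorphic to G(n̄,n̄,r); and if r ≥ n̄, then G/Z(G)^p is isomorphic to the direct product of two cyclic groups of order p^{n̄}. Consequently, for each pair (n̄,r) with n̄, r ≥ 2 there is an infinite chain of powerfully nilpotent groups G(n̄ + i(r−1), n̄ + i(r−1), r), i ≥ 1, in which each group is a direct ancestor of the previous one, terminating in the abelian group C_{p^{n̄}} × C_{p^{n̄}}. -/

import Mathlib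

/-- `H.pPow k` is the subgroup generated by the `k`-th powers of the elements of `H`. -/
def Subgroup.pPow {G : Type*} [Group G] (H : Subgroup G) (k : ℕ) : Subgroup G :=
  Subgroup.closure ((fun x => x ^ k) '' (H : Set G))

/-- A `p`-group `G` is powerful if `p` is odd and `[G,G] ≤ G^p`, or `p = 2` and `[G,G] ≤ G^4`. -/
def IsPowerfulGroup (p : ℕ) (G : Type*) [Group G] : Prop :=
  IsPGroup p G ∧
    ((Odd p ∧ commutator G ≤ Subgroup.pPow ⊤ p) ∨
      (p = 2 ∧ commutator G ≤ Subgroup.pPow ⊤ 4))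

/-- A powerful `p`-group is powerfully nilpotent if it has an ascending chain of subgroups
`⊥ = H 0 ≤ H 1 ≤ ⋯ ≤ H n = ⊤` that is powerfully central, i.e. `[H (i+1), G] ≤ (H i)^p`. -/
def IsPowerfullyNilpotent (p : ℕ) (G : Type*) [Group G] : Prop :=
  IsPowerfulGroup p G ∧
    ∃ (n : ℕ) (H : ℕ → Subgroup G), H 0 = ⊥ ∧ H n = ⊤ ∧
      (∀ i < n, H i ≤ H (i + 1)) ∧
      ∀ i < n, ⁅H (i + 1), (⊤ : Subgroup G)⁆ ≤ (H i).pPow p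

open scoped commutatorElement

/-- The relations of the presentation `⟨a, b ∣ a^(p^n) = 1, b^(p^m) = 1, [a,b] = a^(p^r)⟩`. -/
def splitRels (p n m r : ℕ) : Set (FreeGroup (Fin 2)) :=
  {FreeGroup.of (0 : Fin 2) ^ p ^ n, FreeGroup.of (1 : Fin 2) ^ p ^ m,
    ⁅FreeGroup.of (0 : Fin 2), FreeGroup.of (1 : Fin 2)⁆ * (FreeGroup.of (0 : Fin 2) ^ p ^ r)⁻¹}

/-- The group `G(n,m,r) = ⟨a, b ∣ a^(p^n) = 1, b^(p^m) = 1, [a,b] = a^(p^r)⟩`. -/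
abbrev GSplit (p n m r : ℕ) : Type := PresentedGroup (splitRels p n m r)

/-- `Z(G)^p`: the subgroup generated by the `p`-th powers of the elements of the center. -/
def centerPow (p : ℕ) (G : Type*) [Group G] : Subgroup G :=
  (Subgroup.center G).pPow p

theorem centerPow_le_center (p : ℕ) (G : Type*) [Group G] :
    centerPow p G ≤ Subgroup.center G := by
  apply (Subgroup.closure_le _).mpr
  rintro x ⟨y, hy, rfl⟩
  exact pow_mem hy p

instance centerPow_normal (p : ℕ) (G : Type*) [Group G] : (centerPow p G).Normal := by
  constructor
  intro x hx g
  have hc := Subgroup.mem_center_iff.mp (centerPow_le_center p G hx)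
  have h : g * x * g⁻¹ = x := by rw [hc g, mul_inv_cancel_right]
  rw [h]; exact hx


section PNAux
open Multiplicative Finset
namespace PNAux


lemma pow_mod_eq {G : Type*} [Monoid G] (g : G) {M : ℕ} (h : g ^ M = 1) (k : ℕ) :
    g ^ (k % M) = g ^ k := by
  conv_rhs => rw [← Nat.div_add_mod k M, pow_add, pow_mul, h, one_pow, one_mul]

/-- The hom `Multiplicative (ZMod M) →* G` sending `1` to an element `g` with `g ^ M = 1`. -/
def zhom {G : Type*} [Group G] (M : ℕ) [NeZero M] (g : G) (h : g ^ M = 1) :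
    Multiplicative (ZMod M) →* G where
  toFun x := g ^ (Multiplicative.toAdd x).val
  map_one' := by
    show g ^ (ZMod.val (0 : ZMod M)) = 1
    rw [ZMod.val_zero, pow_zero]
  map_mul' x y := by
    show g ^ ((Multiplicative.toAdd x + Multiplicative.toAdd y).val) = _
    rw [ZMod.val_add, pow_mod_eq g h, pow_add]

@[simp] lemma zhom_apply {G : Type*} [Group G] (M : ℕ) [NeZero M] (g : G) (h : g ^ M = 1)
    (x : ZMod M) : zhom M g h (ofAdd x) = g ^ x.val := rfl

lemma zhom_natCast {G : Type*} [Group G] (M : ℕ) [NeZero M] (g : G) (h : g ^ M = 1) (t : ℕ) :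
    zhom M g h (ofAdd (t : ZMod M)) = g ^ t := by
  rw [zhom_apply, ZMod.val_natCast, pow_mod_eq g h]

lemma zhom_intCast {G : Type*} [Group G] (M : ℕ) [NeZero M] (g : G) (h : g ^ M = 1) (t : ℤ) :
    zhom M g h (ofAdd (t : ZMod M)) = g ^ t := by
  cases t with
  | ofNat s => simpa using zhom_natCast M g h s
  | negSucc s =>
      have : ((Int.negSucc s : ℤ) : ZMod M) = - ((s+1 : ℕ) : ZMod M) := by push_cast; ring
      rw [this]
      have h2 : ofAdd (-((s+1 : ℕ) : ZMod M)) = (ofAdd (((s+1:ℕ)) : ZMod M))⁻¹ := rfl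
      rw [h2, map_inv, zhom_natCast M g h, zpow_negSucc]

lemma zhom_one {G : Type*} [Group G] (M : ℕ) [NeZero M] (g : G) (h : g ^ M = 1) :
    zhom M g h (ofAdd (1 : ZMod M)) = g := by
  simpa using zhom_natCast M g h 1

lemma ofAdd_eq_pow {M : ℕ} [NeZero M] (x : ZMod M) :
    ofAdd x = (ofAdd (1 : ZMod M)) ^ x.val := by
  rw [← ofAdd_nsmul, nsmul_eq_mul, mul_one, ZMod.natCast_zmod_val]

lemma zhom_ext {G : Type*} [Group G] {M : ℕ} [NeZero M]
    {f g : Multiplicative (ZMod M) →* G}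
    (h : f (ofAdd (1 : ZMod M)) = g (ofAdd (1 : ZMod M))) : f = g := by
  refine MonoidHom.ext fun x => ?_
  have : x = (ofAdd (1 : ZMod M)) ^ ZMod.val (Multiplicative.toAdd x : ZMod M) := by
    conv_lhs => rw [show x = ofAdd (Multiplicative.toAdd x) from rfl]
    exact ofAdd_eq_pow _
  rw [this, map_pow, map_pow, h]


lemma geom_sum_structure {R : Type*} [CommRing R] (x : R) (n : ℕ) :
    (∑ j ∈ range n, x ^ j) = (n : R) + (x - 1) * ∑ j ∈ range n, ∑ i ∈ range j, x ^ i := by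
  have h : ∀ j, x ^ j = 1 + (x - 1) * ∑ i ∈ range j, x ^ i := by
    intro j
    have := geom_sum_mul x j
    linear_combination -this
  calc (∑ j ∈ range n, x ^ j) = ∑ j ∈ range n, (1 + (x - 1) * ∑ i ∈ range j, x ^ i) := by
        exact Finset.sum_congr rfl fun j _ => h j
    _ = (n : R) + (x - 1) * ∑ j ∈ range n, ∑ i ∈ range j, x ^ i := by
        rw [Finset.sum_add_distrib, Finset.sum_const, card_range, nsmul_eq_mul, mul_one,
          Finset.mul_sum]

/-- key step: if `v = 1 - p^m * w` with `m ≥ 2` then `v ^ p = 1 - p^(m+1) * w'` with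
`w' ≡ w mod p`. -/
lemma step_int (p : ℕ) (m : ℕ) (hm : 2 ≤ m) (w : ℤ) :
    ∃ w' : ℤ, (1 - (p:ℤ)^m * w) ^ p = 1 - (p:ℤ)^(m+1) * w' ∧ (p:ℤ) ∣ w' - w := by
  set v : ℤ := 1 - (p:ℤ)^m * w with hv
  set d : ℤ := ∑ j ∈ range p, ∑ i ∈ range j, v ^ i with hd
  refine ⟨w - (p:ℤ)^(m-1) * w^2 * d, ?_, ?_⟩
  · have h1 : v ^ p - 1 = (∑ j ∈ range p, v ^ j) * (v - 1) := (geom_sum_mul v p).symm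
    have h2 : (∑ j ∈ range p, v ^ j) = (p : ℤ) + (v - 1) * d := geom_sum_structure v p
    have hmm : (p:ℤ)^(m+1) * (p:ℤ)^(m-1) = (p:ℤ)^m * (p:ℤ)^m := by
      rw [← pow_add, ← pow_add]; congr 1; omega
    have hv1 : v - 1 = -((p:ℤ)^m * w) := by rw [hv]; ring
    calc v ^ p = 1 + (∑ j ∈ range p, v ^ j) * (v - 1) := by linarith [h1]
      _ = 1 + ((p : ℤ) + (v - 1) * d) * (v - 1) := by rw [h2]
      _ = 1 - (p:ℤ)^(m+1) * (w - (p:ℤ)^(m-1) * w^2 * d) := by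
          rw [hv1]
          linear_combination (-(w^2*d)) * hmm
  · refine ⟨-((p:ℤ)^(m-2) * w^2 * d), ?_⟩
    have : (p:ℤ)^(m-1) = (p:ℤ) * (p:ℤ)^(m-2) := by
      rw [← pow_succ']; congr 1; omega
    rw [this]; ring

lemma upow_int (p r : ℕ) (hr : 2 ≤ r) (k : ℕ) :
    ∃ w : ℤ, (1 - (p:ℤ)^r) ^ (p ^ k) = 1 - (p:ℤ)^(r+k) * w ∧ (p:ℤ) ∣ w - 1 := by
  induction k with
  | zero => exact ⟨1, by simp, by simp⟩
  | succ k ih =>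
      obtain ⟨w, hw, hw1⟩ := ih
      obtain ⟨w', hw', hww'⟩ := step_int p (r+k) (by omega) w
      refine ⟨w', ?_, ?_⟩
      · rw [pow_succ, pow_mul, hw, hw']
        congr 2
      · have : w' - 1 = (w' - w) + (w - 1) := by ring
        rw [this]; exact dvd_add hww' hw1


variable (p n r : ℕ)


/-- The multiplier `1 - p^r` in `ZMod (p^n)`. -/
def uZ : ZMod (p^n) := 1 - (p : ZMod (p^n))^r

lemma pz_pow_eq_zero {m : ℕ} (hm : n ≤ m) : (p : ZMod (p^n))^m = 0 := by
  have h : ((p^n : ℕ) : ZMod (p^n)) = 0 := ZMod.natCast_self _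
  have : (p : ZMod (p^n))^m = (p : ZMod (p^n))^n * (p : ZMod (p^n))^(m-n) := by
    rw [← pow_add]; congr 1; omega
  rw [this, ← Nat.cast_pow, h, zero_mul]

lemma uZ_pow_cast (hr : 2 ≤ r) (k : ℕ) :
    ∃ w : ℤ, uZ p n r ^ (p ^ k) = 1 - ((p:ZMod (p^n)))^(r+k) * (w : ZMod (p^n)) ∧
      (p:ℤ) ∣ w - 1 := by
  obtain ⟨w, hw, hw1⟩ := upow_int p r hr k
  refine ⟨w, ?_, hw1⟩
  have := congrArg (fun t : ℤ => (t : ZMod (p^n))) hw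
  push_cast at this
  simpa [uZ] using this

lemma uZ_pow_eq_one (hr : 2 ≤ r) {k : ℕ} (hk : n ≤ r + k) : uZ p n r ^ (p ^ k) = 1 := by
  obtain ⟨w, hw, -⟩ := uZ_pow_cast p n r hr k
  rw [hw, pz_pow_eq_zero p n hk, zero_mul, sub_zero]

lemma uZ_pow_ne_one (hp : p.Prime) (hr : 2 ≤ r) (hrn : r + 1 ≤ n) :
    uZ p n r ^ (p ^ (n - r - 1)) ≠ 1 := by
  obtain ⟨w, hw, hw1⟩ := uZ_pow_cast p n r hr (n - r - 1)
  rw [hw]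
  intro hcon
  have h0 : ((p:ZMod (p^n)))^(r+(n-r-1)) * (w : ZMod (p^n)) = 0 := by
    linear_combination -hcon
  have hexp : r + (n - r - 1) = n - 1 := by omega
  rw [hexp] at h0
  have h1 : (((p:ℤ)^(n-1) * w : ℤ) : ZMod (p^n)) = 0 := by push_cast; exact h0
  rw [ZMod.intCast_zmod_eq_zero_iff_dvd] at h1
  have h2 : ((p:ℤ)^n : ℤ) ∣ (p:ℤ)^(n-1) * w := by exact_mod_cast h1
  have h3 : (p:ℤ)^n = (p:ℤ)^(n-1) * p := by rw [← pow_succ]; congr 1; omega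
  rw [h3] at h2
  have hpne : ((p:ℤ))^(n-1) ≠ 0 :=
    pow_ne_zero _ (by exact_mod_cast hp.ne_zero)
  have hpw : (p:ℤ) ∣ w := (mul_dvd_mul_iff_left hpne).mp h2
  have hone : (p:ℤ) ∣ 1 := by
    have : (1:ℤ) = w - (w - 1) := by ring
    rw [this]; exact dvd_sub hpw hw1
  have h2le := hp.two_le
  rcases Int.isUnit_iff.mp (isUnit_of_dvd_one hone) with h | h <;> omega


lemma orderOf_uZ (hp : p.Prime) (hr : 2 ≤ r) (hrn : r + 1 ≤ n) :
    orderOf (uZ p n r) = p ^ (n - r) := by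
  have hdvd : orderOf (uZ p n r) ∣ p ^ (n - r) :=
    orderOf_dvd_of_pow_eq_one (uZ_pow_eq_one p n r hr (by omega))
  obtain ⟨s, hs, hseq⟩ := (Nat.dvd_prime_pow hp).mp hdvd
  rcases Nat.lt_or_ge s (n - r) with hlt | hge
  · exfalso
    apply uZ_pow_ne_one p n r hp hr hrn
    apply orderOf_dvd_iff_pow_eq_one.mp
    rw [hseq]
    exact pow_dvd_pow p (by omega)
  · rw [hseq]; congr 1; omega

lemma uZ_pow_eq_one_iff (hp : p.Prime) (hr : 2 ≤ r) (hrn : r + 1 ≤ n) (j : ℕ) :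
    uZ p n r ^ j = 1 ↔ p ^ (n - r) ∣ j := by
  rw [← orderOf_dvd_iff_pow_eq_one, orderOf_uZ p n r hp hr hrn]

/-- `1 - p^r` as a unit of `ZMod (p^n)`. -/
def Uu (hr : 1 ≤ r) (hn : 1 ≤ n) : (ZMod (p^n))ˣ :=
  Units.mkOfMulEqOne (uZ p n r) (∑ k ∈ range n, ((p : ZMod (p^n))^r)^k) (by
    have hg := geom_sum_mul ((p : ZMod (p^n))^r) n
    have hz : ((p : ZMod (p^n))^r)^n = 0 := by
      rw [← pow_mul]; exact pz_pow_eq_zero p n (Nat.le_mul_of_pos_left n (by omega))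
    rw [uZ]
    have : (1 - (p : ZMod (p^n))^r) * (∑ k ∈ range n, ((p : ZMod (p^n))^r)^k)
        = 1 - ((p : ZMod (p^n))^r)^n := by linear_combination -hg
    rw [this, hz, sub_zero])

@[simp] lemma val_Uu (hr : 1 ≤ r) (hn : 1 ≤ n) : ((Uu p n r hr hn : (ZMod (p^n))ˣ) : ZMod (p^n)) = uZ p n r := rfl

/-- The automorphism of `Multiplicative (ZMod (p^n))` given by multiplication by `1 - p^r`. -/
def alphaAut (hr : 1 ≤ r) (hn : 1 ≤ n) : MulAut (Multiplicative (ZMod (p^n))) :=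
  AddEquiv.toMultiplicative (AddAut.mulLeft (Uu p n r hr hn))

lemma alphaAut_apply (hr : 1 ≤ r) (hn : 1 ≤ n) (x : ZMod (p^n)) :
    alphaAut p n r hr hn (ofAdd x) = ofAdd (uZ p n r * x) := rfl

lemma alphaAut_pow_apply (hr : 1 ≤ r) (hn : 1 ≤ n) (k : ℕ) (x : ZMod (p^n)) :
    (alphaAut p n r hr hn ^ k) (ofAdd x) = ofAdd (uZ p n r ^ k * x) := by
  induction k generalizing x with
  | zero => simp
  | succ k ih =>
      rw [pow_succ, MulAut.mul_apply, alphaAut_apply, ih (uZ p n r * x)]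
      congr 1
      ring

lemma alphaAut_pow_pn (hp : p.Prime) (hr : 2 ≤ r) (hn : 1 ≤ n) :
    (alphaAut p n r (by omega) hn) ^ (p ^ n) = 1 := by
  apply MulEquiv.ext
  intro x
  have : x = ofAdd (Multiplicative.toAdd x) := rfl
  rw [this, alphaAut_pow_apply, uZ_pow_eq_one p n r hr (by omega), one_mul]
  rfl


section M
variable (p n r : ℕ) (hp : p.Prime) (hr : 2 ≤ r) (hn : 1 ≤ n)

end M
lemma neZero_pn (p n : ℕ) (hp : p.Prime) : NeZero (p^n) := ⟨pow_ne_zero n hp.pos.ne'⟩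
section M2
variable (p n r : ℕ) (hp : p.Prime) (hr : 2 ≤ r) (hn : 1 ≤ n)

/-- The action of `b` on `a`. -/
noncomputable def phiM : Multiplicative (ZMod (p^n)) →* MulAut (Multiplicative (ZMod (p^n))) :=
  haveI : NeZero (p^n) := neZero_pn p n hp
  zhom (p^n) (alphaAut p n r (by omega) hn) (alphaAut_pow_pn p n r hp hr hn)

/-- The concrete model of `G(n,n,r)` as a semidirect product. -/
abbrev Mgrp := Multiplicative (ZMod (p^n)) ⋊[phiM p n r hp hr hn] Multiplicative (ZMod (p^n))

/-- elements of `Mgrp` as pairs -/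
def mk2 (x y : ZMod (p^n)) : Mgrp p n r hp hr hn := ⟨ofAdd x, ofAdd y⟩

lemma phiM_apply (y x : ZMod (p^n)) :
    phiM p n r hp hr hn (ofAdd y) (ofAdd x) = ofAdd (uZ p n r ^ y.val * x) := by
  haveI : NeZero (p^n) := neZero_pn p n hp
  rw [phiM, zhom_apply, alphaAut_pow_apply]

lemma mk2_mul (x y x' y' : ZMod (p^n)) :
    mk2 p n r hp hr hn x y * mk2 p n r hp hr hn x' y' =
      mk2 p n r hp hr hn (x + uZ p n r ^ y.val * x') (y + y') := by
  apply SemidirectProduct.ext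
  · show ofAdd x * phiM p n r hp hr hn (ofAdd y) (ofAdd x') = ofAdd (x + uZ p n r ^ y.val * x')
    rw [phiM_apply]; rfl
  · rfl

lemma mk2_inj {x y x' y' : ZMod (p^n)}
    (h : mk2 p n r hp hr hn x y = mk2 p n r hp hr hn x' y') : x = x' ∧ y = y' := by
  constructor
  · exact congrArg (fun g => Multiplicative.toAdd g.left) h
  · exact congrArg (fun g => Multiplicative.toAdd g.right) h

lemma mk2_one : mk2 p n r hp hr hn 0 0 = 1 := rfl

lemma mk2_congr {x y x' y' : ZMod (p^n)} (h1 : x = x') (h2 : y = y') :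
    mk2 p n r hp hr hn x y = mk2 p n r hp hr hn x' y' := by rw [h1, h2]

lemma mk2_left (x y : ZMod (p^n)) : (mk2 p n r hp hr hn x y).left = ofAdd x := rfl
lemma mk2_right (x y : ZMod (p^n)) : (mk2 p n r hp hr hn x y).right = ofAdd y := rfl

lemma mk2_surj (g : Mgrp p n r hp hr hn) :
    g = mk2 p n r hp hr hn (Multiplicative.toAdd g.left) (Multiplicative.toAdd g.right) := rfl

/-- powers of elements with trivial action part -/
lemma mk2_pow_of_fixed (x y : ZMod (p^n)) (hy : uZ p n r ^ (y.val) = 1) (k : ℕ) :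
    (mk2 p n r hp hr hn x y) ^ k = mk2 p n r hp hr hn ((k : ZMod (p^n)) * x) ((k : ZMod (p^n)) * y) := by
  induction k with
  | zero => simp [mk2_one]
  | succ k ih =>
      rw [pow_succ', ih, mk2_mul, hy]
      congr 1 <;> push_cast <;> ring

lemma mk2_pow_base (x : ZMod (p^n)) (k : ℕ) :
    (mk2 p n r hp hr hn x 0) ^ k = mk2 p n r hp hr hn ((k : ZMod (p^n)) * x) 0 := by
  have := mk2_pow_of_fixed p n r hp hr hn x 0 (by rw [ZMod.val_zero, pow_zero]) k
  simpa using this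

/-- the generator `a` -/
def aM : Mgrp p n r hp hr hn := mk2 p n r hp hr hn 1 0
/-- the generator `b` -/
def bM : Mgrp p n r hp hr hn := mk2 p n r hp hr hn 0 1

lemma commutator_mk2 (x y x' y' : ZMod (p^n)) :
    ⁅mk2 p n r hp hr hn x y, mk2 p n r hp hr hn x' y'⁆ =
      mk2 p n r hp hr hn ((1 - uZ p n r ^ y'.val) * x + (uZ p n r ^ y.val - 1) * x') 0 := by
  have hzero : uZ p n r ^ (0 : ZMod (p^n)).val = 1 := by rw [ZMod.val_zero, pow_zero]
  have key : mk2 p n r hp hr hn ((1 - uZ p n r ^ y'.val) * x + (uZ p n r ^ y.val - 1) * x') 0 *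
      (mk2 p n r hp hr hn x' y' * mk2 p n r hp hr hn x y) =
      mk2 p n r hp hr hn x y * mk2 p n r hp hr hn x' y' := by
    rw [mk2_mul, mk2_mul, mk2_mul, hzero]
    apply mk2_congr <;> ring
  have hdef : ⁅mk2 p n r hp hr hn x y, mk2 p n r hp hr hn x' y'⁆ =
      (mk2 p n r hp hr hn x y * mk2 p n r hp hr hn x' y') *
        (mk2 p n r hp hr hn x' y' * mk2 p n r hp hr hn x y)⁻¹ := by
    rw [commutatorElement_def]; group
  rw [hdef, ← key]; group

end M2

section M3
variable (p n r : ℕ) (hp : p.Prime) (hr : 2 ≤ r) (hn : 1 ≤ n)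

lemma fact_one_lt_pn (p n : ℕ) (hp : p.Prime) (hn : 1 ≤ n) : Fact (1 < p^n) :=
  ⟨lt_of_lt_of_le hp.one_lt (Nat.le_self_pow (by omega) p)⟩

lemma ofAdd_pow (M : ℕ) (x : ZMod M) (k : ℕ) :
    (ofAdd x)^k = ofAdd ((k : ZMod M) * x) := by
  rw [← ofAdd_nsmul, nsmul_eq_mul]

lemma mk2_eq_inr (y : ZMod (p^n)) :
    mk2 p n r hp hr hn 0 y = SemidirectProduct.inr (ofAdd y) := rfl

lemma mk2_eq_inl (x : ZMod (p^n)) :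
    mk2 p n r hp hr hn x 0 = SemidirectProduct.inl (ofAdd x) := rfl

lemma mk2_pow_right (y : ZMod (p^n)) (k : ℕ) :
    (mk2 p n r hp hr hn 0 y) ^ k = mk2 p n r hp hr hn 0 ((k : ZMod (p^n)) * y) := by
  rw [mk2_eq_inr, ← map_pow, ofAdd_pow, mk2_eq_inr]

lemma aM_pow (k : ℕ) : (aM p n r hp hr hn) ^ k = mk2 p n r hp hr hn (k : ZMod (p^n)) 0 := by
  rw [aM, mk2_pow_base, mul_one]

lemma bM_pow (k : ℕ) : (bM p n r hp hr hn) ^ k = mk2 p n r hp hr hn 0 (k : ZMod (p^n)) := by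
  rw [bM, mk2_pow_right, mul_one]

lemma aM_pow_pn : (aM p n r hp hr hn) ^ (p^n) = 1 := by
  rw [aM_pow, ZMod.natCast_self, mk2_one]

lemma bM_pow_pn : (bM p n r hp hr hn) ^ (p^n) = 1 := by
  rw [bM_pow, ZMod.natCast_self, mk2_one]

lemma comm_aM_bM : ⁅aM p n r hp hr hn, bM p n r hp hr hn⁆ = (aM p n r hp hr hn) ^ (p^r) := by
  haveI : Fact (1 < p^n) := fact_one_lt_pn p n hp hn
  rw [aM, bM, commutator_mk2, mk2_pow_base]
  apply mk2_congr
  · rw [ZMod.val_one, ZMod.val_zero, pow_zero, pow_one]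
    push_cast [uZ]
    ring
  · rfl

end M3

section Pres
variable (p N r : ℕ) (hp : p.Prime) (hr : 2 ≤ r) (hN : 1 ≤ N)

/-- the generator `a` of the presented group -/
def aP : GSplit p N N r := PresentedGroup.of 0
/-- the generator `b` of the presented group -/
def bP : GSplit p N N r := PresentedGroup.of 1

lemma relP_mk (w : FreeGroup (Fin 2)) (hw : w ∈ splitRels p N N r) :
    PresentedGroup.mk (splitRels p N N r) w = 1 := by
  apply (QuotientGroup.eq_one_iff _).mpr
  exact Subgroup.subset_normalClosure hw

lemma relP_a : aP p N r ^ (p ^ N) = 1 := by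
  have h := relP_mk p N r _ (Set.mem_insert _ _)
  rw [map_pow] at h
  exact h

lemma relP_b : bP p N r ^ (p ^ N) = 1 := by
  have h := relP_mk p N r (FreeGroup.of (1 : Fin 2) ^ p ^ N)
    (by right; exact Set.mem_insert _ _)
  rw [map_pow] at h
  exact h

lemma relP_c : aP p N r * bP p N r * (aP p N r)⁻¹ * (bP p N r)⁻¹ = aP p N r ^ (p ^ r) := by
  have h := relP_mk p N r
    (⁅FreeGroup.of (0 : Fin 2), FreeGroup.of (1 : Fin 2)⁆ * (FreeGroup.of (0 : Fin 2) ^ p ^ r)⁻¹)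
    (by right; right; rfl)
  rw [map_mul, map_inv, map_pow, map_commutatorElement] at h
  have h2 : ⁅aP p N r, bP p N r⁆ = aP p N r ^ (p ^ r) := by
    have := mul_inv_eq_one.mp h
    exact this
  rw [← h2, commutatorElement_def]

lemma conjP : bP p N r * aP p N r * (bP p N r)⁻¹ = aP p N r ^ ((1 : ℤ) - ((p^r : ℕ) : ℤ)) := by
  have hc := relP_c p N r
  have h1 : bP p N r * (aP p N r)⁻¹ * (bP p N r)⁻¹ = (aP p N r)⁻¹ * (aP p N r ^ (p^r)) := by
    rw [← hc]; group
  have h2 : bP p N r * aP p N r * (bP p N r)⁻¹ = (bP p N r * (aP p N r)⁻¹ * (bP p N r)⁻¹)⁻¹ := by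
    group
  rw [h2, h1, mul_inv_rev, inv_inv]
  have h3 : (aP p N r ^ ((p^r : ℕ)))⁻¹ * aP p N r
      = aP p N r ^ (-((p^r : ℕ) : ℤ)) * aP p N r ^ (1 : ℤ) := by
    rw [zpow_neg, zpow_natCast, zpow_one]
  rw [h3, ← zpow_add]
  congr 1
  ring

/-- hom sending `ZMod (p^N)` to powers of `a` -/
noncomputable def chiA : Multiplicative (ZMod (p^N)) →* GSplit p N N r :=
  haveI := neZero_pn p N hp
  zhom (p^N) (aP p N r) (relP_a p N r)

/-- hom sending `ZMod (p^N)` to powers of `b` -/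
noncomputable def chiB : Multiplicative (ZMod (p^N)) →* GSplit p N N r :=
  haveI := neZero_pn p N hp
  zhom (p^N) (bP p N r) (relP_b p N r)

lemma chiA_one (hN : 1 ≤ N) : chiA p N r hp (ofAdd 1) = aP p N r := by
  haveI := neZero_pn p N hp
  haveI : Fact (1 < p^N) := fact_one_lt_pn p N hp hN
  rw [chiA, zhom_apply, ZMod.val_one, pow_one]

lemma chiB_one (hN : 1 ≤ N) : chiB p N r hp (ofAdd 1) = bP p N r := by
  haveI := neZero_pn p N hp
  haveI : Fact (1 < p^N) := fact_one_lt_pn p N hp hN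
  rw [chiB, zhom_apply, ZMod.val_one, pow_one]

lemma chiA_int (t : ℤ) : chiA p N r hp (ofAdd ((t : ℤ) : ZMod (p^N))) = aP p N r ^ t := by
  haveI := neZero_pn p N hp
  rw [chiA]; exact zhom_intCast _ _ _ t

lemma conj_chiA (hN : 1 ≤ N) (x : ZMod (p^N)) :
    bP p N r * chiA p N r hp (ofAdd x) * (bP p N r)⁻¹
      = chiA p N r hp (ofAdd (uZ p N r * x)) := by
  haveI := neZero_pn p N hp
  have h1 : bP p N r * chiA p N r hp (ofAdd x) * (bP p N r)⁻¹
      = (bP p N r * aP p N r * (bP p N r)⁻¹) ^ (x.val) := by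
    rw [chiA, zhom_apply]
    rw [conj_pow]
  have h2 : uZ p N r * x = ((((1 : ℤ) - ((p^r : ℕ) : ℤ)) * (x.val : ℤ) : ℤ) : ZMod (p^N)) := by
    push_cast [uZ]
    rw [ZMod.natCast_zmod_val]
  rw [h1, conjP p N r, h2, chiA_int, ← zpow_natCast (aP p N r ^ ((1:ℤ) - ((p^r:ℕ):ℤ))) x.val,
    ← zpow_mul]

lemma vZ_spec : uZ p N r * (((Uu p N r (by omega) hN)⁻¹ : (ZMod (p^N))ˣ) : ZMod (p^N)) = 1 := by
  rw [← val_Uu p N r (by omega) hN, ← Units.val_mul, mul_inv_cancel, Units.val_one]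

lemma conj_inv_chiA (x : ZMod (p^N)) :
    (bP p N r)⁻¹ * chiA p N r hp (ofAdd x) * bP p N r
      = chiA p N r hp (ofAdd ((((Uu p N r (by omega) hN)⁻¹ : (ZMod (p^N))ˣ) : ZMod (p^N)) * x)) := by
  set v : ZMod (p^N) := (((Uu p N r (by omega) hN)⁻¹ : (ZMod (p^N))ˣ) : ZMod (p^N)) with hv
  have h := conj_chiA p N r hp hN (v * x)
  rw [← mul_assoc, vZ_spec p N r hr hN, one_mul] at h
  rw [← h]
  group

/-- the set of normal forms `a^x * b^y` -/
def TS : Set (GSplit p N N r) :=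
  Set.range (fun z : ZMod (p^N) × ZMod (p^N) =>
    chiA p N r hp (ofAdd z.1) * chiB p N r hp (ofAdd z.2))

lemma mem_TS (x y : ZMod (p^N)) :
    chiA p N r hp (ofAdd x) * chiB p N r hp (ofAdd y) ∈ TS p N r hp := ⟨(x, y), rfl⟩

lemma TS_stable (hr2 : 2 ≤ r) (hN : 1 ≤ N) : ∀ j : Fin 2, ∀ g ∈ TS p N r hp,
    (PresentedGroup.of j * g ∈ TS p N r hp) ∧ ((PresentedGroup.of j)⁻¹ * g ∈ TS p N r hp) := by
  intro j g hg
  obtain ⟨⟨x, y⟩, rfl⟩ := hg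
  simp only
  fin_cases j
  · constructor
    · have heq : aP p N r * (chiA p N r hp (ofAdd x) * chiB p N r hp (ofAdd y))
          = chiA p N r hp (ofAdd (1 + x)) * chiB p N r hp (ofAdd y) := by
        rw [← mul_assoc, ← chiA_one p N r hp hN, ← map_mul]; rfl
      exact heq ▸ mem_TS p N r hp _ _
    · have heq : (aP p N r)⁻¹ * (chiA p N r hp (ofAdd x) * chiB p N r hp (ofAdd y))
          = chiA p N r hp (ofAdd (-1 + x)) * chiB p N r hp (ofAdd y) := by
        rw [← mul_assoc, ← chiA_one p N r hp hN, ← map_inv, ← map_mul]; rfl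
      exact heq ▸ mem_TS p N r hp _ _
  · constructor
    · have heq : bP p N r * (chiA p N r hp (ofAdd x) * chiB p N r hp (ofAdd y))
          = chiA p N r hp (ofAdd (uZ p N r * x)) * chiB p N r hp (ofAdd (1 + y)) := by
        have h1 : bP p N r * (chiA p N r hp (ofAdd x) * chiB p N r hp (ofAdd y))
            = (bP p N r * chiA p N r hp (ofAdd x) * (bP p N r)⁻¹) *
              (bP p N r * chiB p N r hp (ofAdd y)) := by group
        rw [h1, conj_chiA p N r hp hN, ← chiB_one p N r hp hN, ← map_mul]; rfl
      exact heq ▸ mem_TS p N r hp _ _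
    · have heq : (bP p N r)⁻¹ * (chiA p N r hp (ofAdd x) * chiB p N r hp (ofAdd y))
          = chiA p N r hp (ofAdd ((((Uu p N r (by omega) hN)⁻¹ : (ZMod (p^N))ˣ) : ZMod (p^N)) * x))
            * chiB p N r hp (ofAdd (-1 + y)) := by
        have h1 : (bP p N r)⁻¹ * (chiA p N r hp (ofAdd x) * chiB p N r hp (ofAdd y))
            = ((bP p N r)⁻¹ * chiA p N r hp (ofAdd x) * bP p N r) *
              ((bP p N r)⁻¹ * chiB p N r hp (ofAdd y)) := by group
        rw [h1, conj_inv_chiA p N r hp hr2 hN, ← chiB_one p N r hp hN, ← map_inv, ← map_mul]; rfl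
      exact heq ▸ mem_TS p N r hp _ _

/-- elements mapping `TS` into `TS` -/
def KS (hN : 1 ≤ N) : Subgroup (GSplit p N N r) where
  carrier := {g | ∀ t ∈ TS p N r hp, g * t ∈ TS p N r hp ∧ g⁻¹ * t ∈ TS p N r hp}
  one_mem' := by
    intro t ht
    refine ⟨?_, ?_⟩
    · rw [one_mul]; exact ht
    · rw [inv_one, one_mul]; exact ht
  mul_mem' := by
    intro g h hg hh t ht
    constructor
    · rw [mul_assoc]; exact (hg _ (hh t ht).1).1
    · rw [mul_inv_rev, mul_assoc]; exact (hh _ (hg t ht).2).2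
  inv_mem' := by
    intro g hg t ht
    exact ⟨(hg t ht).2, by rw [inv_inv]; exact (hg t ht).1⟩

lemma TS_univ (hr2 : 2 ≤ r) (hN : 1 ≤ N) (g : GSplit p N N r) : g ∈ TS p N r hp := by
  have hmem : g ∈ KS p N r hp hN :=
    PresentedGroup.generated_by _ (KS p N r hp hN) (fun j => TS_stable p N r hp hr2 hN j) g
  have h1 : (1 : GSplit p N N r) ∈ TS p N r hp := by
    have : chiA p N r hp (ofAdd (0 : ZMod (p^N))) * chiB p N r hp (ofAdd (0 : ZMod (p^N))) = 1 := by
      have e0 : (ofAdd (0 : ZMod (p^N))) = (1 : Multiplicative (ZMod (p^N))) := rfl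
      rw [e0, map_one, map_one, one_mul]
    exact this ▸ mem_TS p N r hp 0 0
  have := (hmem 1 h1).1
  simpa using this

/-- the canonical hom to the concrete model -/
noncomputable def FM : GSplit p N N r →* Mgrp p N r hp hr hN :=
  PresentedGroup.toGroup
    (f := fun i : Fin 2 =>
      if i = (0 : Fin 2) then aM p N r hp hr hN else bM p N r hp hr hN) (by
    intro w hw
    simp only [splitRels, Set.mem_insert_iff, Set.mem_singleton_iff] at hw
    rcases hw with rfl | rfl | rfl
    · rw [map_pow, FreeGroup.lift_apply_of, if_pos rfl, aM_pow_pn]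
    · rw [map_pow, FreeGroup.lift_apply_of, if_neg (by decide), bM_pow_pn]
    · rw [map_mul, map_inv, map_pow, map_commutatorElement, FreeGroup.lift_apply_of,
        FreeGroup.lift_apply_of, if_pos rfl, if_neg (by decide), comm_aM_bM, mul_inv_cancel])

lemma FM_a : FM p N r hp hr hN (aP p N r) = aM p N r hp hr hN := by
  rw [FM, aP]
  exact (PresentedGroup.toGroup.of _).trans (if_pos rfl)

lemma FM_b : FM p N r hp hr hN (bP p N r) = bM p N r hp hr hN := by
  rw [FM, bP]
  exact (PresentedGroup.toGroup.of _).trans (if_neg (by decide))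

lemma FM_chiA (x : ZMod (p^N)) :
    FM p N r hp hr hN (chiA p N r hp (ofAdd x)) = mk2 p N r hp hr hN x 0 := by
  haveI := neZero_pn p N hp
  rw [chiA, zhom_apply, map_pow, FM_a, aM_pow, ZMod.natCast_zmod_val]

lemma FM_chiB (x : ZMod (p^N)) :
    FM p N r hp hr hN (chiB p N r hp (ofAdd x)) = mk2 p N r hp hr hN 0 x := by
  haveI := neZero_pn p N hp
  rw [chiB, zhom_apply, map_pow, FM_b, bM_pow, ZMod.natCast_zmod_val]

lemma FM_nf (x y : ZMod (p^N)) :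
    FM p N r hp hr hN (chiA p N r hp (ofAdd x) * chiB p N r hp (ofAdd y))
      = mk2 p N r hp hr hN x y := by
  rw [map_mul, FM_chiA, FM_chiB, mk2_mul]
  apply mk2_congr
  · rw [mul_zero, add_zero]
  · rw [zero_add]

lemma FM_bij : Function.Bijective (FM p N r hp hr hN) := by
  constructor
  · intro g g' h
    obtain ⟨⟨x, y⟩, rfl⟩ := TS_univ p N r hp hr hN g
    obtain ⟨⟨x', y'⟩, rfl⟩ := TS_univ p N r hp hr hN g'
    simp only at h ⊢
    rw [FM_nf, FM_nf] at h
    obtain ⟨h1, h2⟩ := mk2_inj p N r hp hr hN h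
    rw [h1, h2]
  · intro m
    refine ⟨chiA p N r hp (ofAdd (Multiplicative.toAdd m.left))
      * chiB p N r hp (ofAdd (Multiplicative.toAdd m.right)), ?_⟩
    rw [FM_nf]
    rfl

/-- `G(N,N,r)` is isomorphic to the concrete model. -/
noncomputable def presIso : GSplit p N N r ≃* Mgrp p N r hp hr hN :=
  MulEquiv.ofBijective _ (FM_bij p N r hp hr hN)


end Pres

section Center
variable (p n r : ℕ) (hp : p.Prime) (hr : 2 ≤ r) (hn : 1 ≤ n)

lemma exists_factor_sub_one (hr2 : 2 ≤ r) (j k : ℕ) (hj : p^j ∣ k) :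
    ∃ c, uZ p n r ^ k - 1 = (p : ZMod (p^n))^(r+j) * c := by
  obtain ⟨m, rfl⟩ := hj
  obtain ⟨w, hw, -⟩ := uZ_pow_cast p n r hr2 j
  refine ⟨(∑ i ∈ Finset.range m, (uZ p n r ^ (p^j)) ^ i) * (-(w : ZMod (p^n))), ?_⟩
  have hg := geom_sum_mul (uZ p n r ^ (p^j)) m
  have h1 : uZ p n r ^ (p ^ j * m) = (uZ p n r ^ (p^j)) ^ m := by rw [← pow_mul]
  have h2 : uZ p n r ^ (p^j) - 1 = (p : ZMod (p^n))^(r+j) * (-(w : ZMod (p^n))) := by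
    rw [hw]; ring
  calc uZ p n r ^ (p ^ j * m) - 1 = (uZ p n r ^ (p^j)) ^ m - 1 := by rw [h1]
    _ = (∑ i ∈ Finset.range m, (uZ p n r ^ (p^j)) ^ i) * (uZ p n r ^ (p^j) - 1) := hg.symm
    _ = _ := by rw [h2]; ring

lemma pz_mul_eq_zero_iff (hp2 : p.Prime) {k : ℕ} (hkn : k ≤ n) (x : ZMod (p^n)) :
    (p : ZMod (p^n))^k * x = 0 ↔ p^(n-k) ∣ x.val := by
  haveI := neZero_pn p n hp2
  have h1 : (p : ZMod (p^n))^k * x = (((p^k * x.val : ℕ) : ZMod (p^n))) := by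
    push_cast [ZMod.natCast_zmod_val]
    ring
  rw [h1, ZMod.natCast_eq_zero_iff]
  have h2 : p^n = p^k * p^(n-k) := by rw [← pow_add]; congr 1; omega
  constructor
  · rintro ⟨c, hc⟩
    refine ⟨c, ?_⟩
    apply Nat.eq_of_mul_eq_mul_left (pow_pos hp2.pos k)
    rw [hc, h2]; ring
  · rintro ⟨c, hc⟩
    refine ⟨c, ?_⟩
    rw [hc, h2]; ring

lemma exists_div_of_ann (hp2 : p.Prime) {k : ℕ} (hkn : k ≤ n) (x : ZMod (p^n))
    (hx : (p : ZMod (p^n))^k * x = 0) : ∃ t, x = (p : ZMod (p^n))^(n-k) * t := by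
  haveI := neZero_pn p n hp2
  obtain ⟨m, hm⟩ := (pz_mul_eq_zero_iff p n hp2 hkn x).mp hx
  refine ⟨(m : ZMod (p^n)), ?_⟩
  have : x = ((x.val : ℕ) : ZMod (p^n)) := by rw [ZMod.natCast_zmod_val]
  rw [this, hm]
  push_cast
  ring

lemma left_mul (g h : Mgrp p n r hp hr hn) :
    Multiplicative.toAdd (g * h).left
      = Multiplicative.toAdd g.left
        + uZ p n r ^ (Multiplicative.toAdd g.right).val * Multiplicative.toAdd h.left := by
  have h1 := mk2_mul p n r hp hr hn (Multiplicative.toAdd g.left) (Multiplicative.toAdd g.right)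
    (Multiplicative.toAdd h.left) (Multiplicative.toAdd h.right)
  rw [← mk2_surj, ← mk2_surj] at h1
  rw [h1]
  rfl

lemma right_mul (g h : Mgrp p n r hp hr hn) :
    Multiplicative.toAdd (g * h).right
      = Multiplicative.toAdd g.right + Multiplicative.toAdd h.right := rfl

lemma left_inv_elt (g : Mgrp p n r hp hr hn) :
    Multiplicative.toAdd (g⁻¹).left
      = uZ p n r ^ (-(Multiplicative.toAdd g.right)).val * (-(Multiplicative.toAdd g.left)) := by
  have h1 : (g⁻¹).left = phiM p n r hp hr hn (g.right)⁻¹ (g.left)⁻¹ := rfl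
  rw [h1]
  have h2 : (g.right)⁻¹ = ofAdd (-(Multiplicative.toAdd g.right)) := rfl
  have h3 : (g.left)⁻¹ = ofAdd (-(Multiplicative.toAdd g.left)) := rfl
  rw [h2, h3, phiM_apply]
  rfl

lemma right_inv_elt (g : Mgrp p n r hp hr hn) :
    Multiplicative.toAdd (g⁻¹).right = -(Multiplicative.toAdd g.right) := rfl

/-- the subgroup of elements whose components are killed by `p^k` -/
def annM (k : ℕ) : Subgroup (Mgrp p n r hp hr hn) where
  carrier := {g | (p : ZMod (p^n))^k * Multiplicative.toAdd g.left = 0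
    ∧ (p : ZMod (p^n))^k * Multiplicative.toAdd g.right = 0}
  one_mem' := by
    constructor <;> simp
  mul_mem' := by
    rintro g h ⟨hg1, hg2⟩ ⟨hh1, hh2⟩
    constructor
    · rw [left_mul]
      linear_combination hg1 + (uZ p n r ^ (Multiplicative.toAdd g.right).val) * hh1
    · rw [right_mul]
      linear_combination hg2 + hh2
  inv_mem' := by
    rintro g ⟨hg1, hg2⟩
    constructor
    · rw [left_inv_elt]
      linear_combination (-(uZ p n r ^ (-(Multiplicative.toAdd g.right)).val)) * hg1
    · rw [right_inv_elt]
      linear_combination -hg2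

lemma mem_annM (k : ℕ) (x y : ZMod (p^n)) :
    mk2 p n r hp hr hn x y ∈ annM p n r hp hr hn k
      ↔ (p : ZMod (p^n))^k * x = 0 ∧ (p : ZMod (p^n))^k * y = 0 := Iff.rfl

lemma annM_bot : annM p n r hp hr hn 0 = ⊥ := by
  ext g
  rw [Subgroup.mem_bot]
  constructor
  · rintro ⟨h1, h2⟩
    rw [pow_zero, one_mul] at h1 h2
    rw [mk2_surj p n r hp hr hn g, h1, h2, mk2_one]
  · rintro rfl
    constructor <;> simp

lemma annM_top : annM p n r hp hr hn n = ⊤ := by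
  ext g
  simp only [Subgroup.mem_top, iff_true]
  constructor <;> · rw [pz_pow_eq_zero p n (le_refl n), zero_mul]

lemma annM_mono (i : ℕ) : annM p n r hp hr hn i ≤ annM p n r hp hr hn (i+1) := by
  rintro g ⟨h1, h2⟩
  have e : (p : ZMod (p^n))^(i+1) = (p : ZMod (p^n)) * (p : ZMod (p^n))^i := by
    rw [pow_succ]; ring
  constructor
  · rw [e]; linear_combination (p : ZMod (p^n)) * h1
  · rw [e]; linear_combination (p : ZMod (p^n)) * h2

lemma center_eq (hrn : r + 1 ≤ n) :
    Subgroup.center (Mgrp p n r hp hr hn) = annM p n r hp hr hn r := by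
  haveI := neZero_pn p n hp
  haveI : Fact (1 < p^n) := fact_one_lt_pn p n hp hn
  ext g
  rw [Subgroup.mem_center_iff]
  constructor
  · intro hc
    set x := Multiplicative.toAdd g.left with hx
    set y := Multiplicative.toAdd g.right with hy
    have hga : aM p n r hp hr hn * g = g * aM p n r hp hr hn := hc _
    have hgb : bM p n r hp hr hn * g = g * bM p n r hp hr hn := hc _
    rw [mk2_surj p n r hp hr hn g, ← hx, ← hy] at hga hgb
    rw [aM, mk2_mul, mk2_mul] at hga
    rw [bM, mk2_mul, mk2_mul] at hgb
    rw [ZMod.val_zero, pow_zero] at hga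
    rw [ZMod.val_one, pow_one] at hgb
    obtain ⟨ha1, -⟩ := mk2_inj p n r hp hr hn hga
    obtain ⟨hb1, -⟩ := mk2_inj p n r hp hr hn hgb
    have hu1 : uZ p n r ^ y.val = 1 := by linear_combination -ha1
    constructor
    · show (p : ZMod (p^n))^r * x = 0
      have : uZ p n r * x = x := by linear_combination hb1
      rw [uZ] at this
      linear_combination -this
    · show (p : ZMod (p^n))^r * y = 0
      rw [pz_mul_eq_zero_iff p n hp (by omega)]
      rw [uZ_pow_eq_one_iff p n r hp hr hrn] at hu1
      exact hu1
  · rintro ⟨h1, h2⟩ h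
    set x := Multiplicative.toAdd g.left with hx
    set y := Multiplicative.toAdd g.right with hy
    set x' := Multiplicative.toAdd h.left with hx'
    set y' := Multiplicative.toAdd h.right with hy'
    have hu1 : uZ p n r ^ y.val = 1 := by
      rw [uZ_pow_eq_one_iff p n r hp hr hrn]
      rw [pz_mul_eq_zero_iff p n hp (by omega)] at h2
      exact h2
    obtain ⟨c, hcc⟩ := exists_factor_sub_one p n r hr 0 y'.val (one_dvd _)
    rw [mk2_surj p n r hp hr hn g, mk2_surj p n r hp hr hn h, ← hx, ← hy, ← hx', ← hy',
      mk2_mul, mk2_mul, hu1]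
    apply mk2_congr
    · rw [one_mul]
      have : uZ p n r ^ y'.val * x = x := by
        have hpr : (p : ZMod (p^n))^(r+0) = (p : ZMod (p^n))^r := by rw [add_zero]
        rw [hpr] at hcc
        linear_combination x * hcc + c * h1
      rw [this]
      ring
    · ring

lemma centerPow_eq (hrn : r + 1 ≤ n) :
    centerPow p (Mgrp p n r hp hr hn) = annM p n r hp hr hn (r-1) := by
  have hpr : (p : ZMod (p^n))^r = (p : ZMod (p^n))^(r-1) * (p : ZMod (p^n)) := by
    rw [← pow_succ]; congr 1; omega
  apply le_antisymm
  · rw [centerPow, Subgroup.pPow]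
    apply (Subgroup.closure_le _).mpr
    rintro w ⟨g, hg, rfl⟩
    dsimp only
    rw [center_eq p n r hp hr hn hrn] at hg
    rw [mk2_surj p n r hp hr hn g] at hg ⊢
    obtain ⟨h1, h2⟩ := hg
    have hu1 : uZ p n r ^ (Multiplicative.toAdd g.right).val = 1 := by
      rw [uZ_pow_eq_one_iff p n r hp hr hrn]
      rw [pz_mul_eq_zero_iff p n hp (by omega)] at h2
      exact h2
    rw [mk2_pow_of_fixed p n r hp hr hn _ _ hu1]
    constructor
    · show (p : ZMod (p^n))^(r-1) * ((p : ZMod (p^n)) * Multiplicative.toAdd g.left) = 0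
      rw [← mul_assoc, ← hpr]
      exact h1
    · show (p : ZMod (p^n))^(r-1) * ((p : ZMod (p^n)) * Multiplicative.toAdd g.right) = 0
      rw [← mul_assoc, ← hpr]
      exact h2
  · rintro g ⟨h1, h2⟩
    obtain ⟨t1, ht1⟩ := exists_div_of_ann p n hp (by omega) _ h1
    obtain ⟨t2, ht2⟩ := exists_div_of_ann p n hp (by omega) _ h2
    have hnr1 : n - (r-1) = (n - r) + 1 := by omega
    have hsplit : (p : ZMod (p^n))^(n-(r-1)) = (p : ZMod (p^n)) * (p : ZMod (p^n))^(n-r) := by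
      rw [hnr1, pow_succ]; ring
    set x0 : ZMod (p^n) := (p : ZMod (p^n))^(n-r) * t1 with hx0
    set y0 : ZMod (p^n) := (p : ZMod (p^n))^(n-r) * t2 with hy0
    have hx0r : (p : ZMod (p^n))^r * x0 = 0 := by
      rw [hx0]
      have : (p : ZMod (p^n))^r * ((p : ZMod (p^n))^(n-r) * t1)
          = ((p : ZMod (p^n))^n) * t1 := by
        rw [← mul_assoc, ← pow_add]; congr 2; omega
      rw [this, pz_pow_eq_zero p n (le_refl n), zero_mul]
    have hy0r : (p : ZMod (p^n))^r * y0 = 0 := by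
      rw [hy0]
      have : (p : ZMod (p^n))^r * ((p : ZMod (p^n))^(n-r) * t2)
          = ((p : ZMod (p^n))^n) * t2 := by
        rw [← mul_assoc, ← pow_add]; congr 2; omega
      rw [this, pz_pow_eq_zero p n (le_refl n), zero_mul]
    have hu0 : uZ p n r ^ (y0.val) = 1 := by
      rw [uZ_pow_eq_one_iff p n r hp hr hrn]
      rw [pz_mul_eq_zero_iff p n hp (by omega)] at hy0r
      exact hy0r
    rw [centerPow, Subgroup.pPow]
    apply Subgroup.subset_closure
    refine ⟨mk2 p n r hp hr hn x0 y0, ?_, ?_⟩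
    · rw [center_eq p n r hp hr hn hrn]
      exact ⟨hx0r, hy0r⟩
    · dsimp only
      rw [mk2_pow_of_fixed p n r hp hr hn _ _ hu0]
      rw [mk2_surj p n r hp hr hn g]
      apply mk2_congr
      · rw [ht1, hsplit, hx0]; ring
      · rw [ht2, hsplit, hy0]; ring

end Center

section Quot
variable (p n r n' : ℕ) (hp : p.Prime) (hr : 2 ≤ r) (hn : 1 ≤ n) (hn' : 1 ≤ n')

/-- reduction mod `p^(n')` as a hom of multiplicative groups -/
def redM (hd : n' ≤ n) :
    Multiplicative (ZMod (p^n)) →* Multiplicative (ZMod (p^n')) :=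
  AddMonoidHom.toMultiplicative
    ((ZMod.castHom (pow_dvd_pow p hd) (ZMod (p^n'))).toAddMonoidHom)

lemma redM_apply (hd : n' ≤ n) (x : ZMod (p^n)) :
    redM p n n' hd (ofAdd x) = ofAdd ((ZMod.castHom (pow_dvd_pow p hd) (ZMod (p^n'))) x) := rfl

lemma cast_uZ (hd : n' ≤ n) :
    (ZMod.castHom (pow_dvd_pow p hd) (ZMod (p^n'))) (uZ p n r) = uZ p n' r := by
  rw [uZ, uZ, map_sub, map_one, map_pow, map_natCast]

lemma cast_pow_uZ (hp2 : p.Prime) (hr2 : 2 ≤ r) (hd : n' ≤ n) (y : ZMod (p^n)) :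
    uZ p n' r ^ ((ZMod.castHom (pow_dvd_pow p hd) (ZMod (p^n'))) y).val
      = uZ p n' r ^ y.val := by
  haveI := neZero_pn p n hp2
  haveI := neZero_pn p n' hp2
  have h1 : (ZMod.castHom (pow_dvd_pow p hd) (ZMod (p^n'))) y
      = ((y.val : ℕ) : ZMod (p^n')) := by
    rw [ZMod.natCast_val, ZMod.castHom_apply]
  rw [h1, ZMod.val_natCast]
  exact pow_mod_eq _ (uZ_pow_eq_one p n' r hr2 (by omega)) _

/-- the projection `Mgrp p n r → Mgrp p n' r` -/
def piM (hd : n' ≤ n) :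
    Mgrp p n r hp hr hn →* Mgrp p n' r hp hr hn' where
  toFun g := mk2 p n' r hp hr hn'
    ((ZMod.castHom (pow_dvd_pow p hd) (ZMod (p^n'))) (Multiplicative.toAdd g.left))
    ((ZMod.castHom (pow_dvd_pow p hd) (ZMod (p^n'))) (Multiplicative.toAdd g.right))
  map_one' := by
    have h1 : Multiplicative.toAdd (1 : Mgrp p n r hp hr hn).left = 0 := rfl
    have h2 : Multiplicative.toAdd (1 : Mgrp p n r hp hr hn).right = 0 := rfl
    rw [h1, h2, map_zero, mk2_one]
  map_mul' g h := by
    rw [mk2_mul]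
    have hl := left_mul p n r hp hr hn g h
    have hrr := right_mul p n r hp hr hn g h
    rw [hl, hrr, map_add, map_add, map_mul, map_pow, cast_uZ p n r n' hd,
      cast_pow_uZ p n r n' hp hr hd]

lemma piM_mk2 (hd : n' ≤ n) (x y : ZMod (p^n)) :
    piM p n r n' hp hr hn hn' hd (mk2 p n r hp hr hn x y)
      = mk2 p n' r hp hr hn'
          ((ZMod.castHom (pow_dvd_pow p hd) (ZMod (p^n'))) x)
          ((ZMod.castHom (pow_dvd_pow p hd) (ZMod (p^n'))) y) := rfl

lemma piM_surjective (hd : n' ≤ n) :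
    Function.Surjective (piM p n r n' hp hr hn hn' hd) := by
  haveI := neZero_pn p n hp
  haveI := neZero_pn p n' hp
  intro m
  refine ⟨mk2 p n r hp hr hn (((Multiplicative.toAdd m.left).val : ℕ) : ZMod (p^n))
    (((Multiplicative.toAdd m.right).val : ℕ) : ZMod (p^n)), ?_⟩
  rw [piM_mk2, map_natCast, map_natCast, ZMod.natCast_zmod_val, ZMod.natCast_zmod_val]
  exact (mk2_surj p n' r hp hr hn' m).symm

lemma piM_ker (hd : n' ≤ n) (hnn' : n = n' + (r - 1)) (hrn : r + 1 ≤ n) :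
    MonoidHom.ker (piM p n r n' hp hr hn hn' hd) = annM p n r hp hr hn (r-1) := by
  haveI := neZero_pn p n hp
  haveI := neZero_pn p n' hp
  ext g
  rw [MonoidHom.mem_ker, mk2_surj p n r hp hr hn g, piM_mk2]
  set x := Multiplicative.toAdd g.left
  set y := Multiplicative.toAdd g.right
  have hcast : ∀ z : ZMod (p^n),
      (ZMod.castHom (pow_dvd_pow p hd) (ZMod (p^n'))) z = 0 ↔ p^(n') ∣ z.val := by
    intro z
    have h1 : (ZMod.castHom (pow_dvd_pow p hd) (ZMod (p^n'))) z = ((z.val : ℕ) : ZMod (p^n')) := by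
      rw [ZMod.natCast_val, ZMod.castHom_apply]
    rw [h1, ZMod.natCast_eq_zero_iff]
  constructor
  · intro hone
    have h0 : mk2 p n' r hp hr hn'
        ((ZMod.castHom (pow_dvd_pow p hd) (ZMod (p^n'))) x)
        ((ZMod.castHom (pow_dvd_pow p hd) (ZMod (p^n'))) y) = mk2 p n' r hp hr hn' 0 0 := by
      rw [mk2_one]; exact hone
    obtain ⟨e1, e2⟩ := mk2_inj p n' r hp hr hn' h0
    constructor
    · show (p : ZMod (p^n))^(r-1) * x = 0
      rw [pz_mul_eq_zero_iff p n hp (by omega)]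
      have := (hcast x).mp e1
      have hexp : n - (r-1) = n' := by omega
      rw [hexp]; exact this
    · show (p : ZMod (p^n))^(r-1) * y = 0
      rw [pz_mul_eq_zero_iff p n hp (by omega)]
      have := (hcast y).mp e2
      have hexp : n - (r-1) = n' := by omega
      rw [hexp]; exact this
  · rintro ⟨h1, h2⟩
    rw [pz_mul_eq_zero_iff p n hp (by omega)] at h1 h2
    have hexp : n - (r-1) = n' := by omega
    rw [hexp] at h1 h2
    rw [← mk2_one p n' r hp hr hn']
    apply mk2_congr
    · exact (hcast x).mpr h1
    · exact (hcast y).mpr h2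

/-- the quotient of the model by `Z^p` is the smaller model -/
noncomputable def quotModelIso (hd : n' ≤ n) (hnn' : n = n' + (r - 1)) (hrn : r + 1 ≤ n) :
    (Mgrp p n r hp hr hn ⧸ centerPow p (Mgrp p n r hp hr hn)) ≃* Mgrp p n' r hp hr hn' := by
  have hker : centerPow p (Mgrp p n r hp hr hn)
      = MonoidHom.ker (piM p n r n' hp hr hn hn' hd) := by
    rw [centerPow_eq p n r hp hr hn hrn, piM_ker p n r n' hp hr hn hn' hd hnn' hrn]
  exact (QuotientGroup.quotientMulEquivOfEq hker).trans
    (QuotientGroup.quotientKerEquivOfSurjective _ (piM_surjective p n r n' hp hr hn hn' hd))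

end Quot

section Triv
variable (p n r : ℕ) (hp : p.Prime) (hr : 2 ≤ r) (hn : 1 ≤ n)

/-- when `r ≥ n` the model is just the direct product -/
def trivIso (hrn : n ≤ r) :
    Mgrp p n r hp hr hn ≃* Multiplicative (ZMod (p^n) × ZMod (p^n)) where
  toFun g := ofAdd (Multiplicative.toAdd g.left, Multiplicative.toAdd g.right)
  invFun z := mk2 p n r hp hr hn (Multiplicative.toAdd z).1 (Multiplicative.toAdd z).2
  left_inv g := (mk2_surj p n r hp hr hn g).symm
  right_inv z := rfl
  map_mul' g h := by
    have huZ : uZ p n r = 1 := by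
      rw [uZ, pz_pow_eq_zero p n hrn, sub_zero]
    have hl := left_mul p n r hp hr hn g h
    rw [huZ, one_pow, one_mul] at hl
    have hrr := right_mul p n r hp hr hn g h
    show ofAdd _ = ofAdd _ * ofAdd _
    rw [← ofAdd_add]
    rw [hl, hrr]
    rfl

end Triv

section Powerful
variable (p n r : ℕ) (hp : p.Prime) (hr : 2 ≤ r) (hn : 1 ≤ n)

lemma card_Mgrp : Nat.card (Mgrp p n r hp hr hn) = p ^ (2*n) := by
  have e : Mgrp p n r hp hr hn ≃ (ZMod (p^n)) × (ZMod (p^n)) :=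
    ⟨fun g => (Multiplicative.toAdd g.left, Multiplicative.toAdd g.right),
     fun z => mk2 p n r hp hr hn z.1 z.2,
     fun g => (mk2_surj p n r hp hr hn g).symm,
     fun z => rfl⟩
  rw [Nat.card_congr e, Nat.card_prod, Nat.card_zmod, ← pow_add, two_mul]

lemma isPGroup_Mgrp : IsPGroup p (Mgrp p n r hp hr hn) :=
  IsPGroup.of_card (card_Mgrp p n r hp hr hn)

lemma commutator_elts (g h : Mgrp p n r hp hr hn) :
    ⁅g, h⁆ = mk2 p n r hp hr hn
      ((1 - uZ p n r ^ (Multiplicative.toAdd h.right).val) * Multiplicative.toAdd g.left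
        + (uZ p n r ^ (Multiplicative.toAdd g.right).val - 1) * Multiplicative.toAdd h.left) 0 := by
  conv_lhs => rw [mk2_surj p n r hp hr hn g, mk2_surj p n r hp hr hn h]
  rw [commutator_mk2]

lemma commutator_sq (g h : Mgrp p n r hp hr hn) :
    ∃ t : ZMod (p^n), ⁅g, h⁆ = mk2 p n r hp hr hn ((p : ZMod (p^n))^2 * t) 0 := by
  obtain ⟨c1, hc1⟩ := exists_factor_sub_one p n r hr 0 (Multiplicative.toAdd h.right).val (one_dvd _)
  obtain ⟨c2, hc2⟩ := exists_factor_sub_one p n r hr 0 (Multiplicative.toAdd g.right).val (one_dvd _)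
  rw [add_zero] at hc1 hc2
  have hsplit : (p : ZMod (p^n))^r = (p : ZMod (p^n))^2 * (p : ZMod (p^n))^(r-2) := by
    rw [← pow_add]; congr 1; omega
  refine ⟨(p : ZMod (p^n))^(r-2) *
    (-(c1 * Multiplicative.toAdd g.left) + c2 * Multiplicative.toAdd h.left), ?_⟩
  rw [commutator_elts]
  apply mk2_congr
  · rw [hsplit] at hc1 hc2
    linear_combination (-(Multiplicative.toAdd g.left)) * hc1
      + (Multiplicative.toAdd h.left) * hc2
  · rfl

lemma sq_mem_pPow_p (t : ZMod (p^n)) :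
    mk2 p n r hp hr hn ((p : ZMod (p^n))^2 * t) 0 ∈ Subgroup.pPow ⊤ p := by
  apply Subgroup.subset_closure
  refine ⟨mk2 p n r hp hr hn ((p : ZMod (p^n)) * t) 0, trivial, ?_⟩
  dsimp only
  rw [mk2_pow_base]
  apply mk2_congr
  · rw [sq]; ring
  · rfl

lemma sq_mem_pPow_4 (hp2 : p = 2) (t : ZMod (p^n)) :
    mk2 p n r hp hr hn ((p : ZMod (p^n))^2 * t) 0 ∈ Subgroup.pPow ⊤ 4 := by
  apply Subgroup.subset_closure
  refine ⟨mk2 p n r hp hr hn t 0, trivial, ?_⟩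
  dsimp only
  rw [mk2_pow_base]
  apply mk2_congr
  · subst hp2
    norm_num
  · rfl

lemma isPowerful_Mgrp : IsPowerfulGroup p (Mgrp p n r hp hr hn) := by
  refine ⟨isPGroup_Mgrp p n r hp hr hn, ?_⟩
  rcases hp.eq_two_or_odd' with h2 | hodd
  · right
    refine ⟨h2, ?_⟩
    rw [commutator_def]
    apply Subgroup.commutator_le.mpr
    intro g _ h _
    obtain ⟨t, ht⟩ := commutator_sq p n r hp hr hn g h
    rw [ht]
    exact sq_mem_pPow_4 p n r hp hr hn h2 t
  · left
    refine ⟨hodd, ?_⟩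
    rw [commutator_def]
    apply Subgroup.commutator_le.mpr
    intro g _ h _
    obtain ⟨t, ht⟩ := commutator_sq p n r hp hr hn g h
    rw [ht]
    exact sq_mem_pPow_p p n r hp hr hn t

lemma chain_step (i : ℕ) (hi : i < n) :
    ⁅annM p n r hp hr hn (i+1), (⊤ : Subgroup (Mgrp p n r hp hr hn))⁆
      ≤ (annM p n r hp hr hn i).pPow p := by
  apply Subgroup.commutator_le.mpr
  rintro g ⟨hg1, hg2⟩ h -
  set x := Multiplicative.toAdd g.left with hxdef
  set y := Multiplicative.toAdd g.right with hydef
  set x' := Multiplicative.toAdd h.left with hxdef'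
  set y' := Multiplicative.toAdd h.right with hydef'
  -- factor the two commutator terms
  obtain ⟨c1, hc1⟩ := exists_factor_sub_one p n r hr 0 y'.val (one_dvd _)
  rw [add_zero] at hc1
  have hyv : p^(n-(i+1)) ∣ y.val := by
    rw [← pz_mul_eq_zero_iff p n hp (by omega)]
    exact hg2
  obtain ⟨c2, hc2⟩ := exists_factor_sub_one p n r hr (n-i-1) y.val
    (by have : n - (i+1) = n - i - 1 := by omega
        rw [← this]; exact hyv)
  -- w1 + w2
  set w1 : ZMod (p^n) := -((p : ZMod (p^n))^(r-1) * c1 * x) with hw1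
  set w2 : ZMod (p^n) := (p : ZMod (p^n))^(n-i) * ((p : ZMod (p^n))^(r-2) * c2 * x') with hw2
  have hkey : (1 - uZ p n r ^ y'.val) * x + (uZ p n r ^ y.val - 1) * x'
      = (p : ZMod (p^n)) * (w1 + w2) := by
    have e1 : (p : ZMod (p^n))^r = (p : ZMod (p^n)) * (p : ZMod (p^n))^(r-1) := by
      rw [← pow_succ']; congr 1; omega
    have e2 : (p : ZMod (p^n))^(r+(n-i-1)) =
        (p : ZMod (p^n)) * ((p : ZMod (p^n))^(n-i) * (p : ZMod (p^n))^(r-2)) := by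
      rw [← pow_add, ← pow_succ']; congr 1; omega
    rw [hw1, hw2]
    linear_combination (-x) * hc1 + x' * hc2 + (-(x * c1)) * e1 + (x' * c2) * e2
  have hw1i : (p : ZMod (p^n))^i * w1 = 0 := by
    have e3 : (p : ZMod (p^n))^i * (p : ZMod (p^n))^(r-1)
        = (p : ZMod (p^n))^(r-2) * (p : ZMod (p^n))^(i+1) := by
      rw [← pow_add, ← pow_add]; congr 1; omega
    rw [hw1]
    linear_combination (-(c1 * (p : ZMod (p^n))^(r-2))) * hg1
      + (-(c1 * x)) * e3
  have hw2i : (p : ZMod (p^n))^i * w2 = 0 := by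
    have e4 : (p : ZMod (p^n))^i * (p : ZMod (p^n))^(n-i) = (p : ZMod (p^n))^n := by
      rw [← pow_add]; congr 1; omega
    have e5 : (p : ZMod (p^n))^n = 0 := pz_pow_eq_zero p n (le_refl n)
    rw [hw2]
    linear_combination ((p : ZMod (p^n))^(r-2) * c2 * x') * e4
      + ((p : ZMod (p^n))^(r-2) * c2 * x') * e5
  rw [mk2_surj p n r hp hr hn g, mk2_surj p n r hp hr hn h, commutator_mk2,
    ← hxdef, ← hydef, ← hxdef', ← hydef', hkey]
  apply Subgroup.subset_closure
  refine ⟨mk2 p n r hp hr hn (w1 + w2) 0, ?_, ?_⟩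
  · constructor
    · show (p : ZMod (p^n))^i * (w1 + w2) = 0
      linear_combination hw1i + hw2i
    · show (p : ZMod (p^n))^i * Multiplicative.toAdd (ofAdd (0 : ZMod (p^n))) = 0
      rw [toAdd_ofAdd, mul_zero]
  · dsimp only
    rw [mk2_pow_base]

lemma isPN_Mgrp : IsPowerfullyNilpotent p (Mgrp p n r hp hr hn) := by
  refine ⟨isPowerful_Mgrp p n r hp hr hn, n, fun i => annM p n r hp hr hn i, ?_, ?_, ?_, ?_⟩
  · exact annM_bot p n r hp hr hn
  · exact annM_top p n r hp hr hn
  · intro i _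
    exact annM_mono p n r hp hr hn i
  · intro i hi
    exact chain_step p n r hp hr hn i hi

lemma nonabelian_Mgrp (hrn : r + 1 ≤ n) :
    aM p n r hp hr hn * bM p n r hp hr hn ≠ bM p n r hp hr hn * aM p n r hp hr hn := by
  haveI : Fact (1 < p^n) := fact_one_lt_pn p n hp hn
  intro hcon
  rw [aM, bM, mk2_mul, mk2_mul, ZMod.val_zero, ZMod.val_one, pow_zero, pow_one] at hcon
  obtain ⟨h1, -⟩ := mk2_inj p n r hp hr hn hcon
  have : (p : ZMod (p^n))^r = 0 := by
    rw [uZ] at h1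
    linear_combination h1
  rw [← Nat.cast_pow, ZMod.natCast_eq_zero_iff] at this
  have := Nat.pow_dvd_pow_iff_le_right hp.one_lt |>.mp this
  omega

end Powerful

section Transport
variable {G H : Type*} [Group G] [Group H]

lemma map_pPow (e : G ≃* H) (K : Subgroup G) (k : ℕ) :
    (K.pPow k).map e.toMonoidHom = (K.map e.toMonoidHom).pPow k := by
  rw [Subgroup.pPow, Subgroup.pPow, MonoidHom.map_closure]
  congr 1
  rw [Subgroup.coe_map, Set.image_image, Set.image_image]
  exact Set.image_congr fun a _ => map_pow e.toMonoidHom a k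

lemma map_center (e : G ≃* H) :
    (Subgroup.center G).map e.toMonoidHom = Subgroup.center H := by
  ext h
  rw [Subgroup.mem_map]
  constructor
  · rintro ⟨g, hg, rfl⟩
    rw [Subgroup.mem_center_iff] at hg ⊢
    intro h'
    show h' * e g = e g * h'
    calc h' * e g = e (e.symm h') * e g := by rw [e.apply_symm_apply]
      _ = e (e.symm h' * g) := (map_mul e _ _).symm
      _ = e (g * e.symm h') := by rw [hg (e.symm h')]
      _ = e g * e (e.symm h') := map_mul e _ _
      _ = e g * h' := by rw [e.apply_symm_apply]
  · intro hh
    refine ⟨e.symm h, ?_, by simp⟩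
    rw [Subgroup.mem_center_iff] at hh ⊢
    intro g'
    apply e.injective
    rw [map_mul, map_mul, e.apply_symm_apply]
    exact hh (e g')

lemma map_centerPow (p : ℕ) (e : G ≃* H) :
    (centerPow p G).map e.toMonoidHom = centerPow p H := by
  rw [centerPow, centerPow, map_pPow, map_center]

/-- `G ⧸ Z(G)^p` transports along isomorphisms -/
noncomputable def quotCenterPowEquiv (p : ℕ) (e : G ≃* H) :
    (G ⧸ centerPow p G) ≃* (H ⧸ centerPow p H) :=
  QuotientGroup.congr _ _ e (map_centerPow p e)

lemma isPN_transport (p : ℕ) (e : G ≃* H) (hG : IsPowerfullyNilpotent p G) :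
    IsPowerfullyNilpotent p H := by
  obtain ⟨⟨hPG, hpow⟩, m, Hc, hbot, htop, hmono, hcomm⟩ := hG
  have hmapTop : Subgroup.map e.toMonoidHom ⊤ = ⊤ :=
    Subgroup.map_top_of_surjective _ e.surjective
  have hcommH : commutator H = (commutator G).map e.toMonoidHom := by
    rw [commutator_def, commutator_def, Subgroup.map_commutator, hmapTop]
  refine ⟨⟨?_, ?_⟩, m, fun i => (Hc i).map e.toMonoidHom, ?_, ?_, ?_, ?_⟩
  · intro h
    obtain ⟨k, hk⟩ := hPG (e.symm h)
    refine ⟨k, ?_⟩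
    apply e.symm.injective
    rw [map_pow, hk, map_one]
  · rcases hpow with ⟨hodd, hle⟩ | ⟨h2, hle⟩
    · left
      refine ⟨hodd, ?_⟩
      rw [hcommH]
      calc (commutator G).map e.toMonoidHom
          ≤ ((⊤ : Subgroup G).pPow p).map e.toMonoidHom := Subgroup.map_mono hle
        _ = ((⊤ : Subgroup G).map e.toMonoidHom).pPow p := map_pPow e ⊤ p
        _ = (⊤ : Subgroup H).pPow p := by rw [hmapTop]
    · right
      refine ⟨h2, ?_⟩
      rw [hcommH]
      calc (commutator G).map e.toMonoidHom
          ≤ ((⊤ : Subgroup G).pPow 4).map e.toMonoidHom := Subgroup.map_mono hle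
        _ = ((⊤ : Subgroup G).map e.toMonoidHom).pPow 4 := map_pPow e ⊤ 4
        _ = (⊤ : Subgroup H).pPow 4 := by rw [hmapTop]
  · dsimp only
    rw [hbot, Subgroup.map_bot]
  · dsimp only
    rw [htop, hmapTop]
  · intro i hi
    dsimp only
    exact Subgroup.map_mono (hmono i hi)
  · intro i hi
    dsimp only
    rw [← hmapTop, ← Subgroup.map_commutator]
    calc (⁅Hc (i+1), ⊤⁆ : Subgroup G).map e.toMonoidHom
        ≤ ((Hc i).pPow p).map e.toMonoidHom := Subgroup.map_mono (hcomm i hi)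
      _ = ((Hc i).map e.toMonoidHom).pPow p := map_pPow e _ p

end Transport

end PNAux
end PNAux

/-- For `n̄, r ≥ 2` and `N = n̄ + r - 1`, the group `G = G(N,N,r)` satisfies:
if `r ≤ n̄ - 1` then `G/Z(G)^p ≅ G(n̄,n̄,r)`, and if `r ≥ n̄` then `G/Z(G)^p` is the direct
product of two cyclic groups of order `p^n̄`.  Consequently the groups
`G(n̄ + i(r-1), n̄ + i(r-1), r)`, `i ≥ 1`, form an infinite chain of powerfully nilpotent
groups in which each group is a direct ancestor of the previous one. -/
theorem infinite_branches_of_ancestry_tree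
    (p : ℕ) (hp : p.Prime) (nb r : ℕ) (hnb : 2 ≤ nb) (hr : 2 ≤ r) :
    (r + 1 ≤ nb →
      Nonempty ((GSplit p (nb + r - 1) (nb + r - 1) r ⧸
          centerPow p (GSplit p (nb + r - 1) (nb + r - 1) r)) ≃* GSplit p nb nb r)) ∧
    (nb ≤ r →
      Nonempty ((GSplit p (nb + r - 1) (nb + r - 1) r ⧸
          centerPow p (GSplit p (nb + r - 1) (nb + r - 1) r)) ≃*
        Multiplicative (ZMod (p ^ nb) × ZMod (p ^ nb)))) ∧
    (∀ i : ℕ, 1 ≤ i →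
      IsPowerfullyNilpotent p
        (GSplit p (nb + i * (r - 1)) (nb + i * (r - 1)) r) ∧
      (¬∀ x y : GSplit p (nb + (i + 1) * (r - 1)) (nb + (i + 1) * (r - 1)) r,
        x * y = y * x) ∧
      Nonempty ((GSplit p (nb + (i + 1) * (r - 1)) (nb + (i + 1) * (r - 1)) r ⧸
          centerPow p (GSplit p (nb + (i + 1) * (r - 1)) (nb + (i + 1) * (r - 1)) r)) ≃*
        GSplit p (nb + i * (r - 1)) (nb + i * (r - 1)) r)) := by
  refine ⟨?_, ?_, ?_⟩
  · intro hrnb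
    have hN1 : 1 ≤ nb + r - 1 := by omega
    have hrnN : r + 1 ≤ nb + r - 1 := by omega
    have hnb1 : 1 ≤ nb := by omega
    exact ⟨(PNAux.quotCenterPowEquiv p (PNAux.presIso p (nb+r-1) r hp hr hN1)).trans
      ((PNAux.quotModelIso p (nb+r-1) r nb hp hr hN1 hnb1 (by omega) (by omega) hrnN).trans
        (PNAux.presIso p nb r hp hr hnb1).symm)⟩
  · intro hnbr
    have hN1 : 1 ≤ nb + r - 1 := by omega
    have hrnN : r + 1 ≤ nb + r - 1 := by omega
    have hnb1 : 1 ≤ nb := by omega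
    exact ⟨(PNAux.quotCenterPowEquiv p (PNAux.presIso p (nb+r-1) r hp hr hN1)).trans
      ((PNAux.quotModelIso p (nb+r-1) r nb hp hr hN1 hnb1 (by omega) (by omega) hrnN).trans
        (PNAux.trivIso p nb r hp hr hnb1 hnbr))⟩
  · intro i hi
    have hmul2 : i * (r-1) ≤ (i+1) * (r-1) := Nat.mul_le_mul_right _ (by omega)
    have h2r : 2*(r-1) ≤ (i+1)*(r-1) := Nat.mul_le_mul_right _ (by omega)
    have hni : 1 ≤ nb + i*(r-1) := by omega
    have hni1 : 1 ≤ nb + (i+1)*(r-1) := by omega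
    have heq : nb + (i+1)*(r-1) = (nb + i*(r-1)) + (r-1) := by
      rw [add_mul, one_mul]; omega
    have hrn1 : r + 1 ≤ nb + (i+1)*(r-1) := by omega
    refine ⟨?_, ?_, ?_⟩
    · exact PNAux.isPN_transport p (PNAux.presIso p (nb+i*(r-1)) r hp hr hni).symm
        (PNAux.isPN_Mgrp p (nb+i*(r-1)) r hp hr hni)
    · intro hall
      have e := PNAux.presIso p (nb+(i+1)*(r-1)) r hp hr hni1
      apply PNAux.nonabelian_Mgrp p (nb+(i+1)*(r-1)) r hp hr hni1 hrn1
      have hc := hall (e.symm (PNAux.aM p (nb+(i+1)*(r-1)) r hp hr hni1))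
        (e.symm (PNAux.bM p (nb+(i+1)*(r-1)) r hp hr hni1))
      apply e.symm.injective
      rw [map_mul, map_mul]
      exact hc
    · exact ⟨(PNAux.quotCenterPowEquiv p (PNAux.presIso p (nb+(i+1)*(r-1)) r hp hr hni1)).trans
        ((PNAux.quotModelIso p (nb+(i+1)*(r-1)) r (nb+i*(r-1)) hp hr hni1 hni (by omega) heq hrn1).trans
          (PNAux.presIso p (nb+i*(r-1)) r hp hr hni).symm)⟩
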